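/- Let N ≥ 1 be an integer, h ≠ 0, R > 0, ε > 0, μ > 0. Set θ_j = 2π(j−1)/N, Q_j the rotation matrix of angle θ_j, P_j = R·Q_j·(1,0), M = diag(h/√(h²+R²), 1), M_j = Q_j M. Let c₁ = Rh/(2(h²+R²)^{3/2}), c₂ = (R²/(8(h²+R²)²))·(2h²/(h²+R²) + 1), let h₁ : [0,∞) → ℝ be any function, and define Ψ_{εμ}(z) = log(8/(ε²μ² + |z|²)²)·(1 + c₁z₁ + c₂|z|²) + (4R³/(h(h²+R²)^{3/2}))·h₁(|z|)cos(3θ), z = |z|e^{iθ}. Then for every i ∈ {1,…,N}, Σ_{j≠1} Ψ_{εμ}(M_j^{-1}(P₁ − P_j)) = Σ_{j≠i} Ψ_{εμ}(M_j^{-1}(P_i − P_j)); that is, the sum Σ_{j≠i} Ψ_{εμ}(M_j^{-1}(P_i − P_j)) is independent of i. -/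

import Mathlib

open Real

noncomputable section

/-- Points of `ℝ²` as pairs. -/
abbrev R2 : Type := ℝ × ℝ

/-- Rotation of `ℝ²` by angle `θ`. -/
def rot (θ : ℝ) (p : R2) : R2 :=
  (Real.cos θ * p.1 - Real.sin θ * p.2, Real.sin θ * p.1 + Real.cos θ * p.2)

/-- The linear map `M = diag(h/√(h²+R²), 1)`. -/
def Mmap (h R : ℝ) (z : R2) : R2 := (h / Real.sqrt (h ^ 2 + R ^ 2) * z.1, z.2)

/-- The inverse `M⁻¹ = diag(√(h²+R²)/h, 1)`. -/
def Minv (h R : ℝ) (p : R2) : R2 := (Real.sqrt (h ^ 2 + R ^ 2) / h * p.1, p.2)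

/-- `M_j⁻¹ = M⁻¹ Q_j⁻¹`, with `Q_j` the rotation of angle `θ_j = 2πj/N`
(indices `j : ℕ` starting from `0` represent `j+1 = 1, …, N`). -/
def Mjinv (h R : ℝ) (N : ℕ) (j : ℕ) (p : R2) : R2 :=
  Minv h R (rot (-(2 * Real.pi * j / N)) p)

/-- The vertex `P_j = R·Q_{2πj/N}·(1,0)` of the regular `N`-gon of radius `R`. -/
def Pt (R : ℝ) (N : ℕ) (j : ℕ) : R2 := rot (2 * Real.pi * j / N) (R, 0)

/-- The polar angle of `z ∈ ℝ²`. -/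
def argR2 (z : R2) : ℝ := Complex.arg ((z.1 : ℂ) + (z.2 : ℂ) * Complex.I)

/-- The locally defined approximate stream function of one helical filament:
`Ψ_{εμ}(z) = log(8/(ε²μ²+|z|²)²)(1 + c₁z₁ + c₂|z|²) + (4R³/(h(h²+R²)^{3/2})) h₁(|z|)cos 3θ`,
with `c₁ = Rh/(2(h²+R²)^{3/2})` and `c₂ = (R²/(8(h²+R²)²))(2h²/(h²+R²)+1)`. -/
def PsiEps (h R ε μ : ℝ) (h₁ : ℝ → ℝ) (z : R2) : ℝ :=
  Real.log (8 / (ε ^ 2 * μ ^ 2 + z.1 ^ 2 + z.2 ^ 2) ^ 2)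
      * (1 + R * h / (2 * Real.sqrt (h ^ 2 + R ^ 2) ^ 3) * z.1
          + R ^ 2 / (8 * (h ^ 2 + R ^ 2) ^ 2) * (2 * h ^ 2 / (h ^ 2 + R ^ 2) + 1)
            * (z.1 ^ 2 + z.2 ^ 2))
    + 4 * R ^ 3 / (h * Real.sqrt (h ^ 2 + R ^ 2) ^ 3)
        * h₁ (Real.sqrt (z.1 ^ 2 + z.2 ^ 2)) * Real.cos (3 * argR2 z)


lemma rot_rot (a b : ℝ) (p : R2) : rot a (rot b p) = rot (a + b) p := by
  simp only [rot, Real.cos_add, Real.sin_add, Prod.mk.injEq]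
  constructor <;> ring

lemma rot_sub' (a : ℝ) (p q : R2) : rot a (p - q) = rot a p - rot a q := by
  simp only [rot, Prod.fst_sub, Prod.snd_sub, Prod.mk_sub_mk, Prod.mk.injEq]
  constructor <;> ring

lemma rot_zero (p : R2) : rot 0 p = p := by
  simp [rot]

lemma rot_eq_of (a b : ℝ) (p : R2) (hc : Real.cos a = Real.cos b)
    (hs : Real.sin a = Real.sin b) : rot a p = rot b p := by
  simp [rot, hc, hs]

/-- value of the summand as a function of the residue `k`. -/
def G (h R ε μ : ℝ) (h₁ : ℝ → ℝ) (N : ℕ) (k : ℕ) : ℝ :=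
  PsiEps h R ε μ h₁ (Minv h R (rot (2 * Real.pi * k / N) (R, 0) - (R, 0)))

lemma key (h R ε μ : ℝ) (h₁ : ℝ → ℝ) (N : ℕ) (hN : 0 < N) (i j : ℕ) (hj : j < N) :
    PsiEps h R ε μ h₁ (Mjinv h R N j (Pt R N i - Pt R N j))
      = G h R ε μ h₁ N ((i + (N - j)) % N) := by
  set k := (i + (N - j)) % N with hk
  set t := (i + (N - j)) / N with ht
  have h1 : N * t + k = i + (N - j) := Nat.div_add_mod _ _
  have hNr : (N : ℝ) ≠ 0 := Nat.cast_ne_zero.2 hN.ne'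
  have hreal : (i : ℝ) - j = k + ((t : ℝ) - 1) * N := by
    have h2 := congrArg (Nat.cast : ℕ → ℝ) h1
    push_cast [Nat.cast_sub hj.le] at h2
    linarith
  have hang : 2 * Real.pi * i / N - 2 * Real.pi * j / N
      = 2 * Real.pi * k / N + (((t : ℤ) - 1 : ℤ) : ℝ) * (2 * Real.pi) := by
    push_cast
    field_simp
    linear_combination hreal
  have harg : Mjinv h R N j (Pt R N i - Pt R N j)
      = Minv h R (rot (2 * Real.pi * k / N) (R, 0) - (R, 0)) := by
    unfold Mjinv Pt
    rw [rot_sub', rot_rot, rot_rot]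
    have e1 : -(2 * Real.pi * j / N) + 2 * Real.pi * j / N = 0 := by ring
    rw [e1, rot_zero]
    congr 1
    congr 1
    apply rot_eq_of
    · have : -(2 * Real.pi * j / N) + 2 * Real.pi * i / N
          = 2 * Real.pi * k / N + (((t : ℤ) - 1 : ℤ) : ℝ) * (2 * Real.pi) := by
        rw [← hang]; ring
      rw [this, Real.cos_add_int_mul_two_pi]
    · have : -(2 * Real.pi * j / N) + 2 * Real.pi * i / N
          = 2 * Real.pi * k / N + (((t : ℤ) - 1 : ℤ) : ℝ) * (2 * Real.pi) := by
        rw [← hang]; ring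
      rw [this, Real.sin_add_int_mul_two_pi]
  rw [harg]; rfl

lemma einv (N : ℕ) (hN : 0 < N) (i : ℕ) (hi : i < N) (j : ℕ) (hj : j < N) :
    (i + (N - (i + (N - j)) % N)) % N = j := by
  set k := (i + (N - j)) % N with hk
  have hkN : k < N := Nat.mod_lt _ hN
  set t := (i + (N - j)) / N with ht
  have h1 : N * t + k = i + (N - j) := Nat.div_add_mod _ _
  obtain ⟨s, hs⟩ : ∃ s, N * t = s := ⟨_, rfl⟩
  rw [hs] at h1
  have h2 : i + (N - k) = j + N * t := by omega
  rw [h2, Nat.add_mul_mod_self_left, Nat.mod_eq_of_lt hj]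

lemma e_ne_zero (N : ℕ) (hN : 0 < N) (i : ℕ) (hi : i < N) (j : ℕ) (hj : j < N) (hij : j ≠ i) :
    (i + (N - j)) % N ≠ 0 := by
  intro h0
  have h1 : N * ((i + (N - j)) / N) + (i + (N - j)) % N = i + (N - j) := Nat.div_add_mod _ _
  rw [h0] at h1
  rcases Nat.lt_or_ge ((i + (N - j)) / N) 2 with hlt | hge
  · interval_cases h : ((i + (N - j)) / N) <;> omega
  · have : N * 2 ≤ N * ((i + (N - j)) / N) := Nat.mul_le_mul_left N hge
    omega

lemma e_ne_i (N : ℕ) (hN : 0 < N) (i : ℕ) (hi : i < N) (k : ℕ) (hk : k < N) (hk0 : k ≠ 0) :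
    (i + (N - k)) % N ≠ i := by
  intro h0
  have h1 : N * ((i + (N - k)) / N) + (i + (N - k)) % N = i + (N - k) := Nat.div_add_mod _ _
  rw [h0] at h1
  rcases Nat.lt_or_ge ((i + (N - k)) / N) 2 with hlt | hge
  · interval_cases h : ((i + (N - k)) / N) <;> omega
  · have : N * 2 ≤ N * ((i + (N - k)) / N) := Nat.mul_le_mul_left N hge
    omega

lemma main_sum (g : ℕ → ℝ) (N : ℕ) (hN : 0 < N) (i : ℕ) (hi : i < N) :
    ∑ j ∈ (Finset.range N).erase i, g ((i + (N - j)) % N)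
      = ∑ k ∈ (Finset.range N).erase 0, g k := by
  apply Finset.sum_nbij' (i := fun j => (i + (N - j)) % N) (j := fun k => (i + (N - k)) % N)
  · intro a ha
    rw [Finset.mem_erase, Finset.mem_range] at ha ⊢
    exact ⟨e_ne_zero N hN i hi a ha.2 ha.1, Nat.mod_lt _ hN⟩
  · intro a ha
    rw [Finset.mem_erase, Finset.mem_range] at ha ⊢
    exact ⟨e_ne_i N hN i hi a ha.2 ha.1, Nat.mod_lt _ hN⟩
  · intro a ha
    rw [Finset.mem_erase, Finset.mem_range] at ha
    exact einv N hN i hi a ha.2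
  · intro a ha
    rw [Finset.mem_erase, Finset.mem_range] at ha
    -- need: (i + (N - (i + (N - a)) % N)) % N = a, again einv with roles swapped?
    exact einv N hN i hi a ha.2
  · intro a ha; rfl


/-- **Well-posedness of the choice of `μ`** (Proposition A.1): the sum
`∑_{j≠i} Ψ_{εμ}(M_j⁻¹(P_i − P_j))` does not depend on `i`; it always equals its value
at `i = 1` (index `0` here). -/
theorem interaction_sum_independent_of_vertex
    (N : ℕ) (hN : 1 ≤ N) (h R ε μ : ℝ) (hh : h ≠ 0) (hR : 0 < R) (hε : 0 < ε) (hμ : 0 < μ)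
    (h₁ : ℝ → ℝ) :
    ∀ i : ℕ, i < N →
      ∑ j ∈ (Finset.range N).erase 0,
          PsiEps h R ε μ h₁ (Mjinv h R N j (Pt R N 0 - Pt R N j))
        = ∑ j ∈ (Finset.range N).erase i,
            PsiEps h R ε μ h₁ (Mjinv h R N j (Pt R N i - Pt R N j)) := by
  intro i hi
  have hN0 : 0 < N := hN
  have L : ∀ i' : ℕ, i' < N →
      ∑ j ∈ (Finset.range N).erase i',
          PsiEps h R ε μ h₁ (Mjinv h R N j (Pt R N i' - Pt R N j))
        = ∑ k ∈ (Finset.range N).erase 0, G h R ε μ h₁ N k := by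
    intro i' hi'
    rw [Finset.sum_congr rfl (fun j hj => ?_)]
    · exact main_sum (G h R ε μ h₁ N) N hN0 i' hi'
    · rw [Finset.mem_erase, Finset.mem_range] at hj
      exact key h R ε μ h₁ N hN0 i' j hj.2
  rw [L 0 hN0, L i hi]

end
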